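/- For every fixed i ≠ b, the function (α_b, α_i) ↦ G_i(α_b, α_i) is concave on the open positive orthant {(α_b, α_i) ∈ ℝ^D × ℝ^D : all coordinates strictly positive}. -/

import Mathlib

lemma key_harmonic {ι : Type*} [Fintype ι] [Nonempty ι]
    (c x y : ι → ℝ) (hc : ∀ k, 0 < c k) (hx : ∀ k, 0 < x k) (hy : ∀ k, 0 < y k)
    (a b : ℝ) (ha : 0 ≤ a) (hb : 0 ≤ b) (hab : a + b = 1) :
    a / (∑ k, c k / x k) + b / (∑ k, c k / y k)
      ≤ 1 / (∑ k, c k / (a * x k + b * y k)) := by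
  have hz : ∀ k, 0 < a * x k + b * y k := by
    intro k
    rcases eq_or_lt_of_le ha with h | h
    · have hb1 : b = 1 := by linarith
      simpa [← h, hb1] using hy k
    · have := mul_nonneg hb (hy k).le
      nlinarith [mul_pos h (hx k)]
  set z : ι → ℝ := fun k => a * x k + b * y k with hzdef
  have hSx : 0 < ∑ k, c k / x k :=
    Finset.sum_pos (fun k _ => div_pos (hc k) (hx k)) Finset.univ_nonempty
  have hSy : 0 < ∑ k, c k / y k :=
    Finset.sum_pos (fun k _ => div_pos (hc k) (hy k)) Finset.univ_nonempty
  have hSz : 0 < ∑ k, c k / z k :=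
    Finset.sum_pos (fun k _ => div_pos (hc k) (hz k)) Finset.univ_nonempty
  set Sz : ℝ := ∑ k, c k / z k with hSzdef
  set t : ι → ℝ := fun k => (c k / z k) / Sz with htdef
  have ht1 : ∑ k, t k = 1 := by
    simp only [htdef, ← Finset.sum_div]
    exact div_self hSz.ne'
  -- Cauchy-Schwarz (Engel form) for x
  have hA : 1 / (∑ k, c k / x k) ≤ ∑ k, (t k) ^ 2 * x k / c k := by
    have h := Finset.sq_sum_div_le_sum_sq_div Finset.univ t
      (g := fun k => c k / x k) (fun k _ => div_pos (hc k) (hx k))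
    rw [ht1] at h
    calc 1 / (∑ k, c k / x k) = 1 ^ 2 / (∑ k, c k / x k) := by rw [one_pow]
      _ ≤ ∑ k, (t k) ^ 2 / (c k / x k) := h
      _ = ∑ k, (t k) ^ 2 * x k / c k := by
          refine Finset.sum_congr rfl fun k _ => ?_
          rw [div_div_eq_mul_div]
  have hB : 1 / (∑ k, c k / y k) ≤ ∑ k, (t k) ^ 2 * y k / c k := by
    have h := Finset.sq_sum_div_le_sum_sq_div Finset.univ t
      (g := fun k => c k / y k) (fun k _ => div_pos (hc k) (hy k))
    rw [ht1] at h
    calc 1 / (∑ k, c k / y k) = 1 ^ 2 / (∑ k, c k / y k) := by rw [one_pow]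
      _ ≤ ∑ k, (t k) ^ 2 / (c k / y k) := h
      _ = ∑ k, (t k) ^ 2 * y k / c k := by
          refine Finset.sum_congr rfl fun k _ => ?_
          rw [div_div_eq_mul_div]
  have hC : ∑ k, (t k) ^ 2 * z k / c k = 1 / Sz := by
    have : ∀ k, (t k) ^ 2 * z k / c k = (c k / z k) / Sz ^ 2 := by
      intro k
      have hzk := (hz k).ne'
      have hck := (hc k).ne'
      have hSz' := hSz.ne'
      simp only [htdef, hzdef]
      field_simp
    rw [Finset.sum_congr rfl fun k _ => this k, ← Finset.sum_div, ← hSzdef]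
    rw [sq]
    field_simp
  have hsplit : ∑ k, (t k) ^ 2 * z k / c k
      = a * ∑ k, (t k) ^ 2 * x k / c k + b * ∑ k, (t k) ^ 2 * y k / c k := by
    rw [Finset.mul_sum, Finset.mul_sum, ← Finset.sum_add_distrib]
    refine Finset.sum_congr rfl fun k _ => ?_
    have hck := (hc k).ne'
    field_simp [hzdef]
    ring
  have h1 : a / (∑ k, c k / x k) ≤ a * ∑ k, (t k) ^ 2 * x k / c k := by
    have := mul_le_mul_of_nonneg_left hA ha
    rwa [mul_one_div] at this
  have h2 : b / (∑ k, c k / y k) ≤ b * ∑ k, (t k) ^ 2 * y k / c k := by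
    have := mul_le_mul_of_nonneg_left hB hb
    rwa [mul_one_div] at this
  calc a / (∑ k, c k / x k) + b / (∑ k, c k / y k)
      ≤ a * ∑ k, (t k) ^ 2 * x k / c k + b * ∑ k, (t k) ^ 2 * y k / c k := add_le_add h1 h2
    _ = ∑ k, (t k) ^ 2 * z k / c k := hsplit.symm
    _ = 1 / Sz := hC

/-- Concavity of the rate function on the open positive orthant. -/
theorem stmt_3
    {K D : ℕ} (hK : 2 ≤ K) (hD : 1 ≤ D)
    (b : Fin K)
    (μ : Fin K → Fin D → ℝ)
    (σ : Fin K → Fin D → ℝ) (hσ : ∀ i j, 0 < σ i j)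
    (w : Fin D → ℝ) (hw : ∀ j, 0 < w j) (hw1 : ∑ j, w j = 1)
    (μbar : Fin K → ℝ) (hμbar : ∀ i, μbar i = ∑ j, w j * μ i j)
    (hbest : ∀ i, i ≠ b → μbar i < μbar b)
    (G : Fin K → (Fin D → ℝ) → (Fin D → ℝ) → ℝ)
    (hG : ∀ i ab ai, G i ab ai = (μbar b - μbar i) ^ 2 /
        (2 * (∑ j, (σ b j) ^ 2 * (w j) ^ 2 / ab j
            + ∑ j, (σ i j) ^ 2 * (w j) ^ 2 / ai j)))
    (i : Fin K) (hi : i ≠ b) :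
    ConcaveOn ℝ
      {p : (Fin D → ℝ) × (Fin D → ℝ) | (∀ j, 0 < p.1 j) ∧ (∀ j, 0 < p.2 j)}
      (fun p => G i p.1 p.2) := by
  have hD' : Nonempty (Fin D) := Fin.pos_iff_nonempty.mp hD
  have hC : 0 < (μbar b - μbar i) ^ 2 := pow_pos (sub_pos.mpr (hbest i hi)) 2
  have hcb : ∀ j, 0 < σ b j ^ 2 * w j ^ 2 :=
    fun j => mul_pos (pow_pos (hσ b j) 2) (pow_pos (hw j) 2)
  have hci : ∀ j, 0 < σ i j ^ 2 * w j ^ 2 :=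
    fun j => mul_pos (pow_pos (hσ i j) 2) (pow_pos (hw j) 2)
  have hpos : ∀ (u v a e : ℝ), 0 < u → 0 < v → 0 ≤ a → 0 ≤ e → a + e = 1 →
      0 < a * u + e * v := by
    intro u v a e hu hv ha he hae
    rcases eq_or_lt_of_le ha with h | h
    · have he1 : e = 1 := by linarith
      simpa [← h, he1] using hv
    · nlinarith [mul_pos h hu, mul_nonneg he hv.le]
  constructor
  · rintro p ⟨hp1, hp2⟩ q ⟨hq1, hq2⟩ a e ha he hae
    refine ⟨fun j => ?_, fun j => ?_⟩
    · simpa [smul_eq_mul] using hpos _ _ a e (hp1 j) (hq1 j) ha he hae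
    · simpa [smul_eq_mul] using hpos _ _ a e (hp2 j) (hq2 j) ha he hae
  · rintro p ⟨hp1, hp2⟩ q ⟨hq1, hq2⟩ a e ha he hae
    simp only [hG, smul_eq_mul]
    have hz1 : ∀ j, (a • p + e • q).1 j = a * p.1 j + e * q.1 j := by
      intro j; simp [Prod.fst_add, Pi.add_apply, Pi.smul_apply, smul_eq_mul]
    have hz2 : ∀ j, (a • p + e • q).2 j = a * p.2 j + e * q.2 j := by
      intro j; simp [Prod.snd_add, Pi.add_apply, Pi.smul_apply, smul_eq_mul]
    simp only [hz1, hz2]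
    have hkey := key_harmonic (ι := Fin D ⊕ Fin D)
      (Sum.elim (fun j => σ b j ^ 2 * w j ^ 2) (fun j => σ i j ^ 2 * w j ^ 2))
      (Sum.elim p.1 p.2) (Sum.elim q.1 q.2)
      (by rintro (k | k); exacts [hcb k, hci k])
      (by rintro (k | k); exacts [hp1 k, hp2 k])
      (by rintro (k | k); exacts [hq1 k, hq2 k])
      a e ha he hae
    simp only [Fintype.sum_sum_type, Sum.elim_inl, Sum.elim_inr] at hkey
    set Sx := ∑ j, σ b j ^ 2 * w j ^ 2 / p.1 j + ∑ j, σ i j ^ 2 * w j ^ 2 / p.2 j with hSx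
    set Sy := ∑ j, σ b j ^ 2 * w j ^ 2 / q.1 j + ∑ j, σ i j ^ 2 * w j ^ 2 / q.2 j with hSy
    set Sz := ∑ j, σ b j ^ 2 * w j ^ 2 / (a * p.1 j + e * q.1 j)
      + ∑ j, σ i j ^ 2 * w j ^ 2 / (a * p.2 j + e * q.2 j) with hSz
    have hSxp : 0 < Sx := add_pos
      (Finset.sum_pos (fun j _ => div_pos (hcb j) (hp1 j)) Finset.univ_nonempty)
      (Finset.sum_pos (fun j _ => div_pos (hci j) (hp2 j)) Finset.univ_nonempty)
    have hSyp : 0 < Sy := add_pos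
      (Finset.sum_pos (fun j _ => div_pos (hcb j) (hq1 j)) Finset.univ_nonempty)
      (Finset.sum_pos (fun j _ => div_pos (hci j) (hq2 j)) Finset.univ_nonempty)
    have hSzp : 0 < Sz := add_pos
      (Finset.sum_pos (fun j _ => div_pos (hcb j) (hpos _ _ a e (hp1 j) (hq1 j) ha he hae))
        Finset.univ_nonempty)
      (Finset.sum_pos (fun j _ => div_pos (hci j) (hpos _ _ a e (hp2 j) (hq2 j) ha he hae))
        Finset.univ_nonempty)
    set C := (μbar b - μbar i) ^ 2 with hCdef
    calc a * (C / (2 * Sx)) + e * (C / (2 * Sy))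
        = (C / 2) * (a / Sx + e / Sy) := by
          field_simp
      _ ≤ (C / 2) * (1 / Sz) :=
          mul_le_mul_of_nonneg_left hkey (by positivity)
      _ = C / (2 * Sz) := by
          rw [mul_one_div, div_div]
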